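/- Let p be an odd prime, f an odd positive integer, n a positive integer, and a an integer with a ≡ 1 (mod 4). Then C_p^{(2)}(a,f,n) = 2 if n is odd; C_p^{(2)}(a,f,n) = 4 if n is even and a ≡ 5 (mod 8); and C_p^{(2)}(a,f,n) = 0 otherwise. -/

import Mathlib

open scoped Classical

noncomputable section

/-- `D(m,n) := (m+1-n)^2 - 4m`. -/
def Dfun (m n : ℤ) : ℤ := (m + 1 - n) ^ 2 - 4 * m

/-- `C_p^{(ℓ)}(a,f,n)`: the number of units `m` modulo `ℓ^e`, where `e = ν_ℓ(4nf²)`,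
satisfying `D(p,m) ≡ a f² (mod ℓ^e)`. -/
def Cpl (p : ℕ) (a : ℤ) (f n ℓ : ℕ) : ℕ :=
  ((Finset.range (ℓ ^ ((4 * n * f ^ 2).factorization ℓ))).filter
    (fun m => Nat.Coprime m (ℓ ^ ((4 * n * f ^ 2).factorization ℓ)) ∧
      ((ℓ : ℤ) ^ ((4 * n * f ^ 2).factorization ℓ)) ∣
        (Dfun (p : ℤ) (m : ℤ) - a * (f : ℤ) ^ 2))).card

/- ### Auxiliary lemmas -/

lemma exists_sqrt : ∀ e : ℕ, 3 ≤ e → ∀ c : ℤ, c % 8 = 1 →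
    ∃ x : ℤ, x % 2 = 1 ∧ (2:ℤ)^e ∣ x^2 - c := by
  intro e he
  induction e, he using Nat.le_induction with
  | base =>
    intro c hc
    exact ⟨1, rfl, by norm_num; omega⟩
  | succ e he ih =>
    intro c hc
    obtain ⟨x, hx, k, hk⟩ := ih c hc
    obtain ⟨d, rfl⟩ : ∃ d, e = d + 3 := ⟨e - 3, by omega⟩
    set s : ℤ := 2^d with hs
    obtain ⟨u, hu⟩ : ∃ u, 1 + x = 2*u := ⟨(1+x)/2, by omega⟩
    have hpow : (2:ℤ)^(d+3) = 8*s := by rw [hs]; ring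
    have hpow' : (2:ℤ)^(d+3+1) = 16*s := by rw [hs]; ring
    refine ⟨x + 4*s*k, ?_, ⟨k*u + s*k^2, ?_⟩⟩
    · have h4 : ∀ w : ℤ, (x + 4*w) % 2 = 1 := by intro w; omega
      calc (x + 4*s*k) % 2 = (x + 4*(s*k)) % 2 := by ring_nf
        _ = 1 := h4 (s*k)
    · rw [hpow'] at *
      rw [hpow] at hk
      linear_combination hk + (8*s*k)*hu

lemma classify (e : ℕ) (he : 3 ≤ e) {x y : ℤ} (hx : x % 2 = 1) (hy : y % 2 = 1)
    (h : (2:ℤ)^e ∣ x^2 - y^2) : (2:ℤ)^(e-1) ∣ x - y ∨ (2:ℤ)^(e-1) ∣ x + y := by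
  obtain ⟨d, rfl⟩ : ∃ d, e = d + 3 := ⟨e - 3, by omega⟩
  obtain ⟨u, hu⟩ : ∃ u, x - y = 2*u := ⟨(x-y)/2, by omega⟩
  obtain ⟨w, hw⟩ : ∃ w, x + y = 2*w := ⟨(x+y)/2, by omega⟩
  have huw : u + w = x := by omega
  have hprod : (2:ℤ)^(d+1) ∣ u * w := by
    obtain ⟨c, hc⟩ := h
    refine ⟨c, ?_⟩
    have : (4:ℤ) * (u*w) = 4 * (2^(d+1) * c) := by
      have hx2 : x^2 - y^2 = (x-y)*(x+y) := by ring
      rw [hx2, hu, hw] at hc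
      have h2 : (2:ℤ)^(d+3) = 4 * 2^(d+1) := by ring
      rw [h2] at hc
      linarith [hc]
    linarith
  have hd1 : d + 3 - 1 = d + 2 := by omega
  rw [hd1]
  rcases Int.even_or_odd u with ⟨j, hj⟩ | ⟨j, hj⟩
  · have hwodd : ¬ (2:ℤ) ∣ w := by omega
    left
    obtain ⟨c, hc⟩ := Int.prime_two.pow_dvd_of_dvd_mul_right (d+1) hwodd hprod
    exact ⟨c, by rw [hu, hc]; ring⟩
  · have huodd : ¬ (2:ℤ) ∣ u := by omega
    right
    obtain ⟨c, hc⟩ := Int.prime_two.pow_dvd_of_dvd_mul_left (d+1) huodd hprod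
    exact ⟨c, by rw [hw, hc]; ring⟩

lemma zmod_cast_zero_iff (e : ℕ) (z : ℤ) :
    ((z : ZMod (2^e)) = 0) ↔ (2:ℤ)^e ∣ z := by
  rw [ZMod.intCast_zmod_eq_zero_iff_dvd]
  push_cast
  rfl

lemma count_sqrt (e : ℕ) (he : 3 ≤ e) (c : ℤ) (hc : c % 8 = 1) :
    (Finset.univ.filter (fun t : ZMod (2^e) => t^2 = (c : ZMod (2^e)))).card = 4 := by
  obtain ⟨x, hx, hdvd⟩ := exists_sqrt e he c hc
  obtain ⟨d, rfl⟩ : ∃ d, e = d + 3 := ⟨e - 3, by omega⟩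
  haveI : NeZero (2^(d+3)) := ⟨pow_ne_zero _ two_ne_zero⟩
  set N := 2^(d+3) with hN
  set X : ZMod N := ((x : ℤ) : ZMod N) with hX
  set H : ZMod N := ((2^(d+2) : ℤ) : ZMod N) with hH
  have hd4 : ((4:ℤ)) ∣ (2:ℤ)^(d+3) := ⟨2^(d+1), by ring⟩
  have hd4' : ((4:ℤ)) ∣ (2:ℤ)^(d+2) := ⟨2^d, by ring⟩
  have hX2 : X^2 = (c : ZMod N) := by
    have h0 : ((x^2 - c : ℤ) : ZMod N) = 0 := (zmod_cast_zero_iff (d+3) _).mpr hdvd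
    push_cast at h0
    rw [sub_eq_zero] at h0
    exact h0
  have h2H : 2 * H = 0 := by
    rw [hH, show (2:ZMod N) * ((2^(d+2):ℤ) : ZMod N) = ((2*2^(d+2) : ℤ) : ZMod N) by push_cast; ring,
      zmod_cast_zero_iff]
    exact ⟨1, by ring⟩
  have hHH : H * H = 0 := by
    rw [hH, show ((2^(d+2):ℤ) : ZMod N) * ((2^(d+2):ℤ) : ZMod N) = ((2^(d+2)*2^(d+2) : ℤ) : ZMod N) by push_cast; ring,
      zmod_cast_zero_iff]
    exact ⟨2^(d+1), by ring⟩
  have n1 : 2 * X ≠ 0 := by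
    rw [hX, show (2 : ZMod N) * ((x:ℤ) : ZMod N) = ((2*x : ℤ) : ZMod N) by push_cast; ring,
      Ne, zmod_cast_zero_iff]
    intro h
    have := dvd_trans hd4 h
    omega
  have n2 : H ≠ 0 := by
    rw [hH, Ne, zmod_cast_zero_iff]
    intro h
    have h1 : (0:ℤ) < 2^(d+2) := by positivity
    have h2 : (2:ℤ)^(d+2) < 2^(d+3) := by
      have : (2:ℤ)^(d+3) = 2 * 2^(d+2) := by ring
      omega
    have := Int.le_of_dvd h1 h
    omega
  have n3 : 2 * X ≠ H := by
    rw [hX, hH, show (2 : ZMod N) * ((x:ℤ) : ZMod N) = ((2*x : ℤ) : ZMod N) by push_cast; ring]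
    intro h
    have h0 : ((2*x - 2^(d+2) : ℤ) : ZMod N) = 0 := by
      push_cast at h ⊢
      rw [sub_eq_zero]
      exact h
    rw [zmod_cast_zero_iff] at h0
    have h4 := dvd_trans hd4 h0
    obtain ⟨t, ht⟩ := hd4'
    omega
  have n3' : 2 * X ≠ -H := by
    rw [hX, hH, show (2 : ZMod N) * ((x:ℤ) : ZMod N) = ((2*x : ℤ) : ZMod N) by push_cast; ring]
    intro h
    have h0 : ((2*x + 2^(d+2) : ℤ) : ZMod N) = 0 := by
      push_cast at h ⊢
      rw [h]
      ring
    rw [zmod_cast_zero_iff] at h0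
    have h4 := dvd_trans hd4 h0
    obtain ⟨t, ht⟩ := hd4'
    omega
  have hH' : H = (2:ZMod N)^(d+2) := by rw [hH]; push_cast; ring
  have hset : (Finset.univ.filter (fun t : ZMod N => t^2 = (c : ZMod N)))
      = {X, -X, X+H, -X+H} := by
    ext t
    simp only [Finset.mem_filter, Finset.mem_univ, true_and, Finset.mem_insert,
      Finset.mem_singleton]
    constructor
    · intro ht
      have htx : ((t.val : ℤ) : ZMod N) = t := by
        push_cast
        exact ZMod.natCast_rightInverse t
      have hdvd2 : (2:ℤ)^(d+3) ∣ ((t.val : ℤ)^2 - x^2) := by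
        rw [← zmod_cast_zero_iff]
        push_cast
        push_cast at htx
        rw [htx, sub_eq_zero, ht, hX2]
      have htodd : (t.val : ℤ) % 2 = 1 := by
        by_contra hev
        have hx4 : ∃ u : ℤ, x^2 = 4*u + 1 := by
          obtain ⟨v, hv⟩ : ∃ v : ℤ, x = 2*v+1 := ⟨(x-1)/2, by omega⟩
          exact ⟨v^2 + v, by rw [hv]; ring⟩
        have ht4 : ∃ u : ℤ, (t.val:ℤ)^2 = 4*u := by
          obtain ⟨v, hv⟩ : ∃ v : ℤ, (t.val:ℤ) = 2*v := ⟨(t.val:ℤ)/2, by omega⟩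
          exact ⟨v^2, by rw [hv]; ring⟩
        obtain ⟨u1, hu1⟩ := hx4
        obtain ⟨u2, hu2⟩ := ht4
        have := dvd_trans hd4 hdvd2
        omega
      rcases classify (d+3) (by omega) htodd hx hdvd2 with hkk | hkk
      · obtain ⟨k, hk⟩ : ∃ k : ℤ, (t.val:ℤ) - x = 2^(d+2) * k := hkk
        have hk' := congrArg (fun z : ℤ => (z : ZMod N)) hk
        push_cast at hk'
        push_cast at htx
        rw [htx] at hk'
        have key : t - X = H * ((k:ℤ) : ZMod N) := by
          rw [hX, hH']
          push_cast
          linear_combination hk'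
        rcases Int.even_or_odd k with ⟨j, hj⟩ | ⟨j, hj⟩
        · left
          have h0 : t - X = 0 := by
            rw [key, hj]
            push_cast
            linear_combination ((j:ℤ) : ZMod N) * h2H
          linear_combination h0
        · right; right; left
          have h0 : t - X = H := by
            rw [key, hj]
            push_cast
            linear_combination ((j:ℤ) : ZMod N) * h2H
          linear_combination h0
      · obtain ⟨k, hk⟩ : ∃ k : ℤ, (t.val:ℤ) + x = 2^(d+2) * k := hkk
        have hk' := congrArg (fun z : ℤ => (z : ZMod N)) hk
        push_cast at hk'
        push_cast at htx
        rw [htx] at hk'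
        have key : t + X = H * ((k:ℤ) : ZMod N) := by
          rw [hX, hH']
          push_cast
          linear_combination hk'
        rcases Int.even_or_odd k with ⟨j, hj⟩ | ⟨j, hj⟩
        · right; left
          have h0 : t + X = 0 := by
            rw [key, hj]
            push_cast
            linear_combination ((j:ℤ) : ZMod N) * h2H
          linear_combination h0
        · right; right; right
          have h0 : t + X = H := by
            rw [key, hj]
            push_cast
            linear_combination ((j:ℤ) : ZMod N) * h2H
          linear_combination h0
    · intro ht
      rcases ht with rfl | rfl | rfl | rfl
      · exact hX2
      · rw [neg_pow]; simp [hX2]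
      · rw [add_sq]
        calc X^2 + 2*X*H + H^2 = X^2 + X*(2*H) + H*H := by ring
          _ = (c : ZMod N) := by rw [h2H, hHH, mul_zero, add_zero, add_zero, hX2]
      · rw [add_sq]
        calc (-X)^2 + 2*(-X)*H + H^2 = X^2 + (-X)*(2*H) + H*H := by ring
          _ = (c : ZMod N) := by rw [h2H, hHH, mul_zero, add_zero, add_zero, hX2]
  rw [hset]
  have d12 : X ≠ -X := fun h => n1 (by linear_combination h)
  have d13 : X ≠ X + H := fun h => n2 (by linear_combination -h)
  have d14 : X ≠ -X + H := fun h => n3 (by linear_combination h)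
  have d23 : -X ≠ X + H := fun h => n3' (by linear_combination -h)
  have d24 : -X ≠ -X + H := fun h => n2 (by linear_combination -h)
  have d34 : X + H ≠ -X + H := fun h => n1 (by linear_combination h)
  rw [Finset.card_insert_of_notMem (by simp [d12, d13, d14]),
    Finset.card_insert_of_notMem (by simp [d23, d24]),
    Finset.card_insert_of_notMem (by simp [d34]),
    Finset.card_singleton]

lemma card_bridge (N : ℕ) [NeZero N] (P : ℕ → Prop) [DecidablePred P]
    (Q : ZMod N → Prop) [DecidablePred Q]
    (hPQ : ∀ m, m < N → (P m ↔ Q (m : ZMod N))) :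
    ((Finset.range N).filter P).card = (Finset.univ.filter Q).card := by
  apply Finset.card_bij (fun m _ => ((m : ℕ) : ZMod N))
  · intro m hm
    simp only [Finset.mem_filter, Finset.mem_range] at hm
    simp only [Finset.mem_filter, Finset.mem_univ, true_and]
    exact (hPQ m hm.1).mp hm.2
  · intro m1 h1 m2 h2 h
    simp only [Finset.mem_filter, Finset.mem_range] at h1 h2
    have := congrArg ZMod.val h
    rwa [ZMod.val_cast_of_lt h1.1, ZMod.val_cast_of_lt h2.1] at this
  · intro t ht
    simp only [Finset.mem_filter, Finset.mem_univ, true_and] at ht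
    refine ⟨t.val, ?_, ZMod.natCast_rightInverse t⟩
    simp only [Finset.mem_filter, Finset.mem_range]
    refine ⟨ZMod.val_lt t, (hPQ t.val (ZMod.val_lt t)).mpr ?_⟩
    rw [ZMod.natCast_rightInverse t]
    exact ht

lemma Cpl_card (p : ℕ) (a : ℤ) (f n : ℕ) (E : ℕ)
    (hE : (4 * n * f ^ 2).factorization 2 = E) :
    Cpl p a f n 2 = (Finset.univ.filter
      (fun M : ZMod (2^E) => IsUnit M ∧
        ((p : ZMod (2^E)) + 1 - M)^2 = ((4*(p:ℤ) + a*(f:ℤ)^2 : ℤ) : ZMod (2^E)))).card := by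
  haveI : NeZero (2^E) := ⟨pow_ne_zero _ two_ne_zero⟩
  unfold Cpl
  rw [hE]
  apply card_bridge
  intro m hm
  have hcast : ∀ z : ℤ, (((2:ℕ):ℤ))^E ∣ z ↔ ((z : ZMod (2^E)) = 0) := by
    intro z
    rw [ZMod.intCast_zmod_eq_zero_iff_dvd]
    constructor <;> intro h <;> [skip; skip] <;> · push_cast at h ⊢; exact_mod_cast h
  constructor
  · rintro ⟨h1, h2⟩
    refine ⟨(ZMod.isUnit_iff_coprime m (2^E)).mpr h1, ?_⟩
    have h0 := (hcast _).mp h2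
    unfold Dfun at h0
    push_cast at h0
    push_cast
    linear_combination h0
  · rintro ⟨h1, h2⟩
    refine ⟨(ZMod.isUnit_iff_coprime m (2^E)).mp h1, ?_⟩
    rw [hcast]
    unfold Dfun
    push_cast
    push_cast at h2
    linear_combination h2

lemma val_odd_of_isUnit {E : ℕ} (hE : E ≠ 0) {M : ZMod (2^E)} (h : IsUnit M) :
    M.val % 2 = 1 := by
  haveI : NeZero (2^E) := ⟨pow_ne_zero _ two_ne_zero⟩
  have hM : ((M.val : ℕ) : ZMod (2^E)) = M := ZMod.natCast_rightInverse M
  rw [← hM, ZMod.isUnit_iff_coprime,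
    Nat.coprime_pow_right_iff (Nat.pos_of_ne_zero hE)] at h
  have h' : Nat.gcd M.val 2 = 1 := h
  by_contra hodd
  have h2 : (2:ℕ) ∣ Nat.gcd M.val 2 := Nat.dvd_gcd (by omega) dvd_rfl
  rw [h'] at h2
  omega

lemma isUnit_of_castHom_eq_one {E : ℕ} (hE : E ≠ 0) (M : ZMod (2^E))
    (h : ZMod.castHom (dvd_pow_self 2 hE) (ZMod 2) M = 1) : IsUnit M := by
  haveI : NeZero (2^E) := ⟨pow_ne_zero _ two_ne_zero⟩
  have hM : ((M.val : ℕ) : ZMod (2^E)) = M := ZMod.natCast_rightInverse M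
  rw [← hM, ZMod.isUnit_iff_coprime,
    Nat.coprime_pow_right_iff (Nat.pos_of_ne_zero hE)]
  have h2 : (M.val : ZMod 2) = 1 := by
    rw [ZMod.castHom_apply] at h
    rw [ZMod.natCast_val]
    exact h
  have h3 : M.val % 2 = 1 := by
    rcases Nat.mod_two_eq_zero_or_one M.val with h0 | h0
    · exfalso
      have := ZMod.natCast_mod M.val 2
      rw [h0] at this
      rw [← this] at h2
      simp at h2
    · exact h0
  exact Nat.coprime_comm.mp ((Nat.Prime.coprime_iff_not_dvd Nat.prime_two).mpr (by omega))

lemma fact_two_eq (f n : ℕ) (hf : Odd f) (hn : 0 < n) (hf0 : 0 < f) :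
    (4 * n * f ^ 2).factorization 2 = 2 + n.factorization 2 := by
  have h4 : (4:ℕ) ≠ 0 := by norm_num
  have hnne : n ≠ 0 := hn.ne'
  have hfne : f^2 ≠ 0 := pow_ne_zero _ hf0.ne'
  rw [Nat.factorization_mul (by positivity) hfne, Nat.factorization_mul h4 hnne]
  simp only [Finsupp.add_apply]
  have hff : f.factorization 2 = 0 := by
    apply Nat.factorization_eq_zero_of_not_dvd
    intro hdvd
    have := hf
    rw [Nat.odd_iff] at this
    omega
  have h44 : (4:ℕ) = 2^2 := by norm_num
  rw [h44, Nat.Prime.factorization_pow Nat.prime_two]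
  simp [hff]

/-- Lemma 4.2 (David–Smith), the case `ℓ = 2`: `C_p^{(2)}(a,f,n)` equals `2` if `n` is odd,
`4` if `n` is even and `a ≡ 5 (mod 8)`, and `0` otherwise. -/
theorem Cpl_at_two (p : ℕ) (hp : p.Prime) (hp2 : p ≠ 2)
    (f : ℕ) (hf : Odd f) (hf0 : 0 < f) (n : ℕ) (hn : 0 < n)
    (a : ℤ) (ha : a % 4 = 1) :
    (¬ (2 ∣ n) → Cpl p a f n 2 = 2) ∧
    (2 ∣ n → a % 8 = 5 → Cpl p a f n 2 = 4) ∧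
    (2 ∣ n → a % 8 ≠ 5 → Cpl p a f n 2 = 0) := by
  have hpodd : p % 2 = 1 := by
    rcases Nat.Prime.eq_two_or_odd hp with h | h
    · exact absurd h hp2
    · exact h
  obtain ⟨u, hu⟩ : ∃ u, p = 2*u+1 := ⟨p/2, by omega⟩
  have hfodd : f % 2 = 1 := Nat.odd_iff.mp hf
  obtain ⟨s, hsf⟩ : ∃ s, f = 2*s+1 := ⟨f/2, by omega⟩
  refine ⟨?_, ?_, ?_⟩
  · -- n odd
    intro h2n
    have hE2 : (4 * n * f ^ 2).factorization 2 = 2 := by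
      rw [fact_two_eq f n hf hn hf0, Nat.factorization_eq_zero_of_not_dvd h2n]
    rw [Cpl_card p a f n 2 hE2]
    haveI : NeZero (2^2) := ⟨by norm_num⟩
    obtain ⟨w, hw⟩ : ∃ w : ℤ, a = 4*w+1 := ⟨(a-1)/4, by omega⟩
    have key1 : ∀ U S W : ZMod (2^2),
        (2*U+1+1-1)^2 = 4*(2*U+1)+(4*W+1)*(2*S+1)^2 := by decide
    have key3 : ∀ U S W : ZMod (2^2),
        (2*U+1+1-3)^2 = 4*(2*U+1)+(4*W+1)*(2*S+1)^2 := by decide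
    have hset : (Finset.univ.filter (fun M : ZMod (2^2) => IsUnit M ∧
        ((p : ZMod (2^2))+1-M)^2 = ((4*(p:ℤ)+a*(f:ℤ)^2 : ℤ) : ZMod (2^2))))
        = {1, 3} := by
      ext M
      simp only [Finset.mem_filter, Finset.mem_univ, true_and, Finset.mem_insert,
        Finset.mem_singleton]
      constructor
      · rintro ⟨hM, -⟩
        have hodd := val_odd_of_isUnit (by norm_num) hM
        have hlt : M.val < 2^2 := ZMod.val_lt M
        have hMv : ((M.val : ℕ) : ZMod (2^2)) = M := ZMod.natCast_rightInverse M
        have hv13 : M.val = 1 ∨ M.val = 3 := by omega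
        rcases hv13 with h | h <;> rw [h] at hMv
        · left; rw [← hMv]; norm_num
        · right; rw [← hMv]; norm_num
      · intro hM
        have heq : ((p : ZMod (2^2))+1-M)^2 = ((4*(p:ℤ)+a*(f:ℤ)^2 : ℤ) : ZMod (2^2)) := by
          rcases hM with rfl | rfl
          · rw [hu, hsf, hw]
            push_cast
            linear_combination key1 (u : ZMod (2^2)) (s : ZMod (2^2)) ((w:ℤ) : ZMod (2^2))
          · rw [hu, hsf, hw]
            push_cast
            linear_combination key3 (u : ZMod (2^2)) (s : ZMod (2^2)) ((w:ℤ) : ZMod (2^2))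
        refine ⟨?_, heq⟩
        rcases hM with rfl | rfl
        · exact isUnit_one
        · exact IsUnit.of_mul_eq_one (a := (3 : ZMod (2^2))) 3 (by decide)
    rw [hset]
    rw [Finset.card_insert_of_notMem (by decide), Finset.card_singleton]
  · -- n even, a ≡ 5 mod 8
    intro h2n ha5
    have hv1 : 0 < n.factorization 2 := Nat.Prime.factorization_pos_of_dvd Nat.prime_two hn.ne' h2n
    have hE3 : 3 ≤ (4 * n * f ^ 2).factorization 2 := by
      rw [fact_two_eq f n hf hn hf0]; omega
    have hEne : (4 * n * f ^ 2).factorization 2 ≠ 0 := by omega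
    rw [Cpl_card p a f n _ rfl]
    set E := (4 * n * f ^ 2).factorization 2 with hEdef
    obtain ⟨r, hr⟩ : ∃ r : ℤ, (f:ℤ)^2 = 8*r+1 := by
      rw [hsf]
      push_cast
      obtain ⟨j, hjj⟩ := Int.even_mul_succ_self (s:ℤ)
      exact ⟨j, by linear_combination 4*hjj⟩
    obtain ⟨t, hat⟩ : ∃ t : ℤ, a = 8*t+5 := ⟨(a-5)/8, by omega⟩
    have hpz : (p:ℤ) = 2*(u:ℤ)+1 := by rw [hu]; push_cast; ring
    obtain ⟨K, hK⟩ : ∃ K : ℤ, 4*(p:ℤ)+a*(f:ℤ)^2 = 8*K+1 :=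
      ⟨(u:ℤ) + 8*t*r + t + 5*r + 1, by rw [hpz, hat, hr]; ring⟩
    have hc : (4*(p:ℤ)+a*(f:ℤ)^2) % 8 = 1 := by rw [hK]; omega
    have hcount := count_sqrt E hE3 (4*(p:ℤ)+a*(f:ℤ)^2) hc
    rw [← hcount]
    apply Finset.card_bij (fun M _ => (p : ZMod (2^E)) + 1 - M)
    · intro M hM
      simp only [Finset.mem_filter, Finset.mem_univ, true_and] at *
      exact hM.2
    · intro M1 h1 M2 h2 h
      linear_combination -h
    · intro T hT
      simp only [Finset.mem_filter, Finset.mem_univ, true_and] at hT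
      refine ⟨(p : ZMod (2^E)) + 1 - T, ?_, by ring⟩
      simp only [Finset.mem_filter, Finset.mem_univ, true_and]
      constructor
      · refine isUnit_of_castHom_eq_one hEne _ ?_
        set φ := ZMod.castHom (dvd_pow_self 2 hEne) (ZMod 2) with hφ
        have h8 : (8 : ZMod 2) = 0 := by decide
        have hcz : ((4*(p:ℤ)+a*(f:ℤ)^2 : ℤ) : ZMod 2) = 1 := by
          rw [hK]
          push_cast
          rw [h8, zero_mul, zero_add]
        have hφT2 : (φ T)^2 = 1 := by
          have := congrArg φ hT
          rw [map_pow, map_intCast] at this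
          rw [this, hcz]
        have hφT : φ T = 1 := by
          have hsq : ∀ y : ZMod 2, y^2 = 1 → y = 1 := by decide
          exact hsq _ hφT2
        rw [map_sub, map_add, map_one, map_natCast, hφT]
        have hp1 : ((p:ℕ) : ZMod 2) = 1 := by
          rw [← ZMod.natCast_mod p 2, hpodd, Nat.cast_one]
        rw [hp1]
        ring
      · rw [sub_sub_cancel]
        exact hT
  · -- n even, a ≢ 5 mod 8
    intro h2n ha5
    have ha1 : a % 8 = 1 := by omega
    have hv1 : 0 < n.factorization 2 := Nat.Prime.factorization_pos_of_dvd Nat.prime_two hn.ne' h2n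
    have hE3 : 3 ≤ (4 * n * f ^ 2).factorization 2 := by
      rw [fact_two_eq f n hf hn hf0]; omega
    have hEne : (4 * n * f ^ 2).factorization 2 ≠ 0 := by omega
    rw [Cpl_card p a f n _ rfl]
    set E := (4 * n * f ^ 2).factorization 2 with hEdef
    haveI : NeZero (2^E) := ⟨pow_ne_zero _ two_ne_zero⟩
    rw [Finset.card_eq_zero, Finset.eq_empty_iff_forall_notMem]
    rintro M hM
    simp only [Finset.mem_filter, Finset.mem_univ, true_and] at hM
    obtain ⟨hMu, hMeq⟩ := hM
    have h8dvd : (8:ℕ) ∣ 2^E := by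
      have h83 : (8:ℕ) = 2^3 := by norm_num
      rw [h83]
      exact pow_dvd_pow 2 hE3
    set ψ := ZMod.castHom h8dvd (ZMod 8) with hψ
    have h8 := congrArg ψ hMeq
    rw [map_pow, map_sub, map_add, map_one, map_natCast, map_intCast] at h8
    have hψM : ψ M = ((M.val : ℕ) : ZMod 8) := by
      rw [ZMod.castHom_apply]
      exact (ZMod.natCast_val M).symm
    have hModd : M.val % 2 = 1 := val_odd_of_isUnit hEne hMu
    obtain ⟨v, hvv⟩ : ∃ v, M.val = 2*v+1 := ⟨M.val/2, by omega⟩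
    obtain ⟨t, hat⟩ : ∃ t : ℤ, a = 8*t+1 := ⟨(a-1)/8, by omega⟩
    rw [hψM, hvv, hu, hsf, hat] at h8
    push_cast at h8
    have key : ∀ U V S T : ZMod 8,
        (2*U+1+1-(2*V+1))^2 ≠ 4*(2*U+1) + (8*T+1)*(2*S+1)^2 := by decide
    exact key (u : ZMod 8) (v : ZMod 8) (s : ZMod 8) ((t:ℤ) : ZMod 8) (by linear_combination h8)

end
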